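/- Let R = (R^n, {A_σ}_{σ∈Σ}, B, C) be a reachable and observable representation of a family of formal power series Ψ = {S_j | j ∈ J}. If every S_j is square summable, then all eigenvalues of the matrix Ã = Σ_{σ∈Σ} A_σᵀ ⊗ A_σᵀ lie strictly inside the unit disk. -/

import Mathlib

open Matrix

/-- For a word `w = σ₁⋯σ_k`, `wordProd A w = A_{σ_k} ⋯ A_{σ₁}`. -/
def wordProd {S : Type*} {n : ℕ} (A : S → Matrix (Fin n) (Fin n) ℝ) :
    List S → Matrix (Fin n) (Fin n) ℝ :=
  fun w => w.foldl (fun M σ => A σ * M) 1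

namespace StableAux

open Kronecker

variable {S : Type*} {n p : ℕ}

lemma foldl_eq (A : S → Matrix (Fin n) (Fin n) ℝ) :
    ∀ (w : List S) (M : Matrix (Fin n) (Fin n) ℝ),
      w.foldl (fun M σ => A σ * M) M = wordProd A w * M := by
  intro w
  induction w with
  | nil => intro M; simp [wordProd]
  | cons σ w ih =>
    intro M
    rw [List.foldl_cons, ih]
    show _ = List.foldl _ _ _ * M
    rw [List.foldl_cons, ih (A σ * 1), mul_one, mul_assoc]

lemma wordProd_cons (A : S → Matrix (Fin n) (Fin n) ℝ) (σ : S) (w : List S) :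
    wordProd A (σ :: w) = wordProd A w * A σ := by
  show List.foldl _ _ _ = _
  rw [List.foldl_cons, foldl_eq, mul_one]

lemma wordProd_append (A : S → Matrix (Fin n) (Fin n) ℝ) (w u : List S) :
    wordProd A (w ++ u) = wordProd A u * wordProd A w := by
  show List.foldl _ _ _ = _
  rw [List.foldl_append, foldl_eq]; rfl

lemma kron_pow_eq [Fintype S] (A : S → Matrix (Fin n) (Fin n) ℝ) (k : ℕ) :
    (∑ σ : S, (A σ)ᵀ ⊗ₖ (A σ)ᵀ) ^ k
      = ∑ f : Fin k → S, (wordProd A (List.ofFn f))ᵀ ⊗ₖ (wordProd A (List.ofFn f))ᵀ := by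
  induction k with
  | zero =>
    rw [pow_zero, Fintype.sum_unique]
    simp [wordProd, Matrix.one_kronecker_one]
  | succ k ih =>
    rw [pow_succ', ih, Finset.sum_mul_sum]
    rw [← Fintype.sum_prod_type']
    apply Fintype.sum_equiv (Fin.consEquiv (fun _ => S))
    intro ⟨σ, f⟩
    rw [← Matrix.mul_kronecker_mul, ← Matrix.transpose_mul]
    have : List.ofFn ((Fin.consEquiv fun _ => S) (σ, f)) = σ :: List.ofFn f := by
      rw [List.ofFn_succ]; rfl
    rw [this, wordProd_cons]

/-- Square-summability extends from the generators to the whole reachable space. -/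
lemma summable_all {J : Type*} (A : S → Matrix (Fin n) (Fin n) ℝ) (B : J → (Fin n → ℝ))
    (C : Matrix (Fin p) (Fin n) ℝ)
    (hreach : Submodule.span ℝ
      {v : Fin n → ℝ | ∃ (w : List S) (j : J), v = (wordProd A w) *ᵥ B j} = ⊤)
    (hsum : ∀ j : J, Summable (fun w : List S =>
      ∑ i : Fin p, ((C *ᵥ (wordProd A w *ᵥ B j)) i) ^ 2)) :
    ∀ x : Fin n → ℝ, Summable (fun w : List S =>
      ∑ i : Fin p, ((C *ᵥ (wordProd A w *ᵥ x)) i) ^ 2) := by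
  intro x
  have hx : x ∈ Submodule.span ℝ
      {v : Fin n → ℝ | ∃ (w : List S) (j : J), v = (wordProd A w) *ᵥ B j} := by
    rw [hreach]; trivial
  induction hx using Submodule.span_induction with
  | mem v hv =>
    obtain ⟨w, j, rfl⟩ := hv
    have key : (fun w' : List S => ∑ i : Fin p,
        ((C *ᵥ (wordProd A w' *ᵥ (wordProd A w *ᵥ B j))) i) ^ 2)
        = (fun w'' : List S => ∑ i : Fin p, ((C *ᵥ (wordProd A w'' *ᵥ B j)) i) ^ 2)
          ∘ (fun w' => w ++ w') := by
      funext w'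
      simp only [Function.comp_apply, Matrix.mulVec_mulVec, wordProd_append]
    rw [key]
    exact (hsum j).comp_injective (List.append_right_injective w)
  | zero =>
    simp only [Matrix.mulVec_zero]
    simpa using summable_zero
  | add y z _ _ hy hz =>
    apply Summable.of_nonneg_of_le (fun w => by positivity) ?_
      ((hy.mul_left 2).add (hz.mul_left 2))
    intro w
    show ∑ i : Fin p, ((C *ᵥ (wordProd A w *ᵥ (y + z))) i) ^ 2 ≤ _
    rw [Matrix.mulVec_add, Matrix.mulVec_add, Finset.mul_sum, Finset.mul_sum,
      ← Finset.sum_add_distrib]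
    apply Finset.sum_le_sum
    intro i _
    simp only [Pi.add_apply]
    nlinarith [sq_nonneg ((C *ᵥ (wordProd A w *ᵥ y)) i - (C *ᵥ (wordProd A w *ᵥ z)) i)]
  | smul a y _ hy =>
    have key : (fun w : List S => ∑ i : Fin p, ((C *ᵥ (wordProd A w *ᵥ (a • y))) i) ^ 2)
        = fun w : List S => a ^ 2 * ∑ i : Fin p, ((C *ᵥ (wordProd A w *ᵥ y)) i) ^ 2 := by
      funext w
      rw [Matrix.mulVec_smul, Matrix.mulVec_smul, Finset.mul_sum]
      apply Finset.sum_congr rfl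
      intro i _
      simp [mul_pow]
      try ring
    rw [key]
    exact hy.mul_left _

/-- Observability can be witnessed by finitely many words. -/
lemma obs_finset (A : S → Matrix (Fin n) (Fin n) ℝ) (C : Matrix (Fin p) (Fin n) ℝ)
    (hobs : ∀ x : Fin n → ℝ,
      (∀ w : List S, C *ᵥ ((wordProd A w) *ᵥ x) = 0) → x = 0) :
    ∃ W : Finset (List S), ∀ x : Fin n → ℝ,
      (∀ w ∈ W, C *ᵥ (wordProd A w *ᵥ x) = 0) → x = 0 := by
  classical
  set K : List S → Submodule ℝ (Fin n → ℝ) :=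
    fun w => LinearMap.ker ((Matrix.mulVecLin C).comp (Matrix.mulVecLin (wordProd A w)))
    with hK
  have hmem : ∀ (w : List S) (x : Fin n → ℝ),
      x ∈ K w ↔ C *ᵥ (wordProd A w *ᵥ x) = 0 := by
    intro w x
    simp [hK]
  have hwf : WellFounded ((· < ·) : Submodule ℝ (Fin n → ℝ) → Submodule ℝ (Fin n → ℝ) → Prop) :=
    (inferInstance : WellFoundedLT (Submodule ℝ (Fin n → ℝ))).wf
  obtain ⟨M₀, ⟨W, hW⟩, hmin⟩ := hwf.has_min
    {M : Submodule ℝ (Fin n → ℝ) | ∃ W : Finset (List S), M = W.inf K}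
    ⟨⊤, ∅, by simp⟩
  refine ⟨W, ?_⟩
  intro x hx
  have hxM : x ∈ M₀ := by
    rw [hW, Submodule.mem_finsetInf]
    intro w hw
    rw [hmem]
    exact hx w hw
  apply hobs
  intro w
  have h1 : M₀ ⊓ K w ∈ {M : Submodule ℝ (Fin n → ℝ) | ∃ W : Finset (List S), M = W.inf K} := by
    refine ⟨insert w W, ?_⟩
    rw [Finset.inf_insert, hW, inf_comm]
  have h2 : M₀ ⊓ K w = M₀ := by
    rcases (inf_le_left : M₀ ⊓ K w ≤ M₀).lt_or_eq with h | h
    · exact absurd h (hmin _ h1)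
    · exact h
  rw [← hmem]
  have : x ∈ M₀ ⊓ K w := h2.symm ▸ hxM
  exact this.2

/-- A finite observability witness gives an algebraic coercivity estimate. -/
lemma coercive (A : S → Matrix (Fin n) (Fin n) ℝ) (C : Matrix (Fin p) (Fin n) ℝ)
    (W : Finset (List S))
    (hW : ∀ x : Fin n → ℝ, (∀ w ∈ W, C *ᵥ (wordProd A w *ᵥ x) = 0) → x = 0) :
    ∃ c : ℝ, 0 ≤ c ∧ ∀ x : Fin n → ℝ,
      ∑ i : Fin n, x i ^ 2
        ≤ c * ∑ w ∈ W, ∑ i : Fin p, ((C *ᵥ (wordProd A w *ᵥ x)) i) ^ 2 := by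
  classical
  set Φ : (Fin n → ℝ) →ₗ[ℝ] ({w // w ∈ W} × Fin p → ℝ) :=
    LinearMap.pi (fun q => (LinearMap.proj q.2).comp
      ((Matrix.mulVecLin C).comp (Matrix.mulVecLin (wordProd A q.1.1)))) with hΦ
  have hΦapp : ∀ (x : Fin n → ℝ) (q : {w // w ∈ W} × Fin p),
      Φ x q = (C *ᵥ (wordProd A q.1.1 *ᵥ x)) q.2 := by
    intro x q; simp [hΦ]
  have hker : LinearMap.ker Φ = ⊥ := by
    rw [LinearMap.ker_eq_bot']
    intro x hx
    apply hW
    intro w hw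
    funext i
    have := congrFun hx (⟨w, hw⟩, i)
    rw [hΦapp] at this
    simpa using this
  obtain ⟨Ψ, hΨ⟩ := Φ.exists_leftInverse_of_injective hker
  set δ : ({w // w ∈ W} × Fin p) → ({w // w ∈ W} × Fin p → ℝ) :=
    fun q => fun j => if q = j then 1 else 0 with hδ
  refine ⟨∑ i : Fin n, ∑ q : {w // w ∈ W} × Fin p, (Ψ (δ q) i) ^ 2, by positivity, ?_⟩
  intro x
  have hx : ∀ i : Fin n, x i = ∑ q : {w // w ∈ W} × Fin p, Φ x q * Ψ (δ q) i := by
    intro i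
    have h1 : Ψ (Φ x) = x := by
      have := congrArg (fun g => g x) hΨ
      simpa using this
    have h2 : Ψ (Φ x) i = ∑ q : {w // w ∈ W} × Fin p, Φ x q * Ψ (δ q) i := by
      conv_lhs => rw [pi_eq_sum_univ (Φ x)]
      rw [map_sum]
      simp only [Finset.sum_apply, _root_.map_smul, Pi.smul_apply, smul_eq_mul, hδ]
    rw [← h2, h1]
  have hSx : (∑ q : {w // w ∈ W} × Fin p, (Φ x q) ^ 2)
      = ∑ w ∈ W, ∑ i : Fin p, ((C *ᵥ (wordProd A w *ᵥ x)) i) ^ 2 := by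
    rw [Fintype.sum_prod_type,
      ← Finset.sum_coe_sort W (fun w => ∑ i : Fin p, ((C *ᵥ (wordProd A w *ᵥ x)) i) ^ 2)]
    apply Finset.sum_congr rfl
    intro w _
    apply Finset.sum_congr rfl
    intro i _
    rw [hΦapp]
  calc ∑ i : Fin n, x i ^ 2
      ≤ ∑ i : Fin n, (∑ q : {w // w ∈ W} × Fin p, (Ψ (δ q) i) ^ 2)
          * (∑ q : {w // w ∈ W} × Fin p, (Φ x q) ^ 2) := by
        apply Finset.sum_le_sum
        intro i _
        rw [hx i]
        have h2 := Finset.sum_mul_sq_le_sq_mul_sq Finset.univ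
          (fun q : {w // w ∈ W} × Fin p => Ψ (δ q) i)
          (fun q : {w // w ∈ W} × Fin p => Φ x q)
        calc (∑ q : {w // w ∈ W} × Fin p, Φ x q * Ψ (δ q) i) ^ 2
            = (∑ q : {w // w ∈ W} × Fin p, Ψ (δ q) i * Φ x q) ^ 2 := by
              congr 1; apply Finset.sum_congr rfl; intros; ring
          _ ≤ _ := h2
    _ = (∑ i : Fin n, ∑ q : {w // w ∈ W} × Fin p, (Ψ (δ q) i) ^ 2)
          * ∑ w ∈ W, ∑ i : Fin p, ((C *ᵥ (wordProd A w *ᵥ x)) i) ^ 2 := by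
        rw [← Finset.sum_mul]
        rw [hSx]

end StableAux

namespace StableAux

open Kronecker

variable {S : Type*} {n p : ℕ}

/-- The state trajectories are square summable. -/
lemma summable_state (A : S → Matrix (Fin n) (Fin n) ℝ) (C : Matrix (Fin p) (Fin n) ℝ)
    (hall : ∀ x : Fin n → ℝ, Summable (fun w : List S =>
      ∑ i : Fin p, ((C *ᵥ (wordProd A w *ᵥ x)) i) ^ 2))
    (W : Finset (List S)) (c : ℝ)
    (hcoer : ∀ x : Fin n → ℝ, ∑ i : Fin n, x i ^ 2
      ≤ c * ∑ u ∈ W, ∑ i : Fin p, ((C *ᵥ (wordProd A u *ᵥ x)) i) ^ 2) :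
    ∀ x : Fin n → ℝ, Summable (fun w : List S => ∑ i : Fin n, ((wordProd A w *ᵥ x) i) ^ 2) := by
  intro x
  have hbound : Summable (fun w : List S =>
      c * ∑ u ∈ W, ∑ i : Fin p, ((C *ᵥ (wordProd A (w ++ u) *ᵥ x)) i) ^ 2) := by
    apply Summable.mul_left c
    apply summable_sum
    intro u _
    have : (fun w : List S => ∑ i : Fin p, ((C *ᵥ (wordProd A (w ++ u) *ᵥ x)) i) ^ 2)
        = (fun w' : List S => ∑ i : Fin p, ((C *ᵥ (wordProd A w' *ᵥ x)) i) ^ 2)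
          ∘ (fun w => w ++ u) := rfl
    rw [this]
    exact (hall x).comp_injective (List.append_left_injective u)
  apply Summable.of_nonneg_of_le (fun w => by positivity) ?_ hbound
  intro w
  calc ∑ i : Fin n, ((wordProd A w *ᵥ x) i) ^ 2
      ≤ c * ∑ u ∈ W, ∑ i : Fin p, ((C *ᵥ (wordProd A u *ᵥ (wordProd A w *ᵥ x))) i) ^ 2 :=
        hcoer (wordProd A w *ᵥ x)
    _ = c * ∑ u ∈ W, ∑ i : Fin p, ((C *ᵥ (wordProd A (w ++ u) *ᵥ x)) i) ^ 2 := by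
        congr 1
        apply Finset.sum_congr rfl
        intro u _
        simp only [Matrix.mulVec_mulVec, wordProd_append, mul_assoc]

/-- The Frobenius-type weights are summable. -/
lemma summable_g (A : S → Matrix (Fin n) (Fin n) ℝ)
    (hstate : ∀ x : Fin n → ℝ,
      Summable (fun w : List S => ∑ i : Fin n, ((wordProd A w *ᵥ x) i) ^ 2)) :
    Summable (fun w : List S => ∑ kk : Fin n, ∑ i : Fin n,
      ((wordProd A w *ᵥ Pi.single kk 1) i) ^ 2) := by
  apply summable_sum
  intro kk _
  exact hstate (Pi.single kk 1)

lemma entry_sq_le (A : S → Matrix (Fin n) (Fin n) ℝ) (w : List S) (a b : Fin n) :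
    (wordProd A w a b) ^ 2
      ≤ ∑ kk : Fin n, ∑ i : Fin n, ((wordProd A w *ᵥ Pi.single kk 1) i) ^ 2 := by
  have h1 : (wordProd A w a b) ^ 2 ≤ ∑ i : Fin n, ((wordProd A w *ᵥ Pi.single b 1) i) ^ 2 := by
    have h0 : ((wordProd A w *ᵥ Pi.single b 1) a) ^ 2 = (wordProd A w a b) ^ 2 := by
      simp [Matrix.mulVec_single]
    rw [← h0]
    exact Finset.single_le_sum (f := fun i => ((wordProd A w *ᵥ Pi.single b 1) i) ^ 2)
      (fun i _ => sq_nonneg _) (Finset.mem_univ a)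
  exact h1.trans (Finset.single_le_sum
    (f := fun kk => ∑ i : Fin n, ((wordProd A w *ᵥ Pi.single kk 1) i) ^ 2)
    (fun kk _ => Finset.sum_nonneg fun i _ => sq_nonneg _) (Finset.mem_univ b))

lemma t_tendsto [Fintype S] (g : List S → ℝ) (hg : Summable g) :
    Filter.Tendsto (fun k : ℕ => ∑ f : Fin k → S, g (List.ofFn f))
      Filter.atTop (nhds 0) := by
  have hinj : Function.Injective (fun s : (Σ k : ℕ, Fin k → S) => List.ofFn s.2) := by
    intro s t h
    have := List.ofFn_inj'.mp h
    cases s; cases t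
    simpa using this
  have h1 : Summable (fun s : (Σ k : ℕ, Fin k → S) => g (List.ofFn s.2)) :=
    hg.comp_injective hinj
  have h2 := h1.sigma
  have h3 : (fun k : ℕ => ∑' f : Fin k → S, g (List.ofFn f))
      = fun k : ℕ => ∑ f : Fin k → S, g (List.ofFn f) := by
    funext k
    exact tsum_fintype _
  rw [h3] at h2
  exact h2.tendsto_atTop_zero

lemma entry_bound [Fintype S] (A : S → Matrix (Fin n) (Fin n) ℝ) (k : ℕ)
    (q r : Fin n × Fin n) :
    |((∑ σ : S, (A σ)ᵀ ⊗ₖ (A σ)ᵀ) ^ k) q r|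
      ≤ ∑ f : Fin k → S, ∑ kk : Fin n, ∑ i : Fin n,
          ((wordProd A (List.ofFn f) *ᵥ Pi.single kk 1) i) ^ 2 := by
  rw [kron_pow_eq]
  rw [Matrix.sum_apply]
  apply (Finset.abs_sum_le_sum_abs _ _).trans
  apply Finset.sum_le_sum
  intro f _
  set w := List.ofFn f
  have : ((wordProd A w)ᵀ ⊗ₖ (wordProd A w)ᵀ) q r
      = wordProd A w r.1 q.1 * wordProd A w r.2 q.2 := by
    simp [Matrix.kroneckerMap_apply]
  rw [this]
  set g := ∑ kk : Fin n, ∑ i : Fin n, ((wordProd A w *ᵥ Pi.single kk 1) i) ^ 2 with hgdef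
  have h1 := entry_sq_le A w r.1 q.1
  have h2 := entry_sq_le A w r.2 q.2
  rw [abs_mul]
  nlinarith [sq_nonneg (|wordProd A w r.1 q.1| - |wordProd A w r.2 q.2|),
    sq_abs (wordProd A w r.1 q.1), sq_abs (wordProd A w r.2 q.2),
    abs_nonneg (wordProd A w r.1 q.1), abs_nonneg (wordProd A w r.2 q.2)]


lemma abs_lt_one_of_entries {ι : Type*} [Fintype ι] [DecidableEq ι]
    (M : Matrix ι ι ℝ) (t : ℕ → ℝ)
    (hent : ∀ (k : ℕ) (i j : ι), |(M ^ k) i j| ≤ t k)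
    (htt : Filter.Tendsto t Filter.atTop (nhds 0)) :
    ∀ μ : ℂ, μ ∈ spectrum ℂ (M.map (algebraMap ℝ ℂ)) → ‖μ‖ < 1 := by
  intro μ hμ
  rw [spectrum.mem_iff, Matrix.isUnit_iff_isUnit_det, isUnit_iff_ne_zero, not_not] at hμ
  obtain ⟨v, hv0, hv⟩ := Matrix.exists_mulVec_eq_zero_iff.mpr hμ
  have hMv : (M.map (algebraMap ℝ ℂ)) *ᵥ v = μ • v := by
    rw [Matrix.sub_mulVec] at hv
    have h2 : (algebraMap ℂ (Matrix ι ι ℂ) μ) *ᵥ v = μ • v := by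
      rw [Algebra.algebraMap_eq_smul_one, Matrix.smul_mulVec, Matrix.one_mulVec]
    rw [h2] at hv
    exact (sub_eq_zero.mp hv).symm
  have hpow : ∀ k : ℕ, ((M.map (algebraMap ℝ ℂ)) ^ k) *ᵥ v = μ ^ k • v := by
    intro k
    induction k with
    | zero => simp
    | succ k ih =>
      rw [pow_succ, ← Matrix.mulVec_mulVec, hMv, Matrix.mulVec_smul, ih, smul_smul,
        pow_succ, mul_comm]
  have hmap : ∀ k : ℕ, (M.map (algebraMap ℝ ℂ)) ^ k = (M ^ k).map (algebraMap ℝ ℂ) := by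
    intro k
    have h := map_pow ((algebraMap ℝ ℂ).mapMatrix) M k
    rw [RingHom.mapMatrix_apply, RingHom.mapMatrix_apply] at h
    exact h.symm
  obtain ⟨i0, hi0'⟩ := Function.ne_iff.mp hv0
  have hi0 : v i0 ≠ 0 := by simpa using hi0'
  by_contra hge
  push_neg at hge
  have hkey : ∀ k : ℕ, ‖v i0‖ ≤ t k * ∑ j, ‖v j‖ := by
    intro k
    have e1 : ‖v i0‖ ≤ ‖μ‖ ^ k * ‖v i0‖ :=
      le_mul_of_one_le_left (norm_nonneg _) (one_le_pow₀ hge)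
    have e2 : ‖μ‖ ^ k * ‖v i0‖
        = ‖(((M.map (algebraMap ℝ ℂ)) ^ k) *ᵥ v) i0‖ := by
      rw [hpow k]
      simp [Pi.smul_apply, smul_eq_mul, _root_.map_mul, map_pow]
    have e4 : ((((M.map (algebraMap ℝ ℂ)) ^ k) *ᵥ v) i0)
        = ∑ j, (algebraMap ℝ ℂ) ((M ^ k) i0 j) * v j := by
      rw [hmap k]
      simp [Matrix.mulVec, dotProduct, Matrix.map_apply]
    have e3 : ‖(((M.map (algebraMap ℝ ℂ)) ^ k) *ᵥ v) i0‖
        ≤ t k * ∑ j, ‖v j‖ := by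
      rw [e4]
      apply (norm_sum_le _ _).trans
      rw [Finset.mul_sum]
      apply Finset.sum_le_sum
      intro j _
      rw [norm_mul]
      apply mul_le_mul_of_nonneg_right _ (norm_nonneg _)
      calc ‖(algebraMap ℝ ℂ) ((M ^ k) i0 j)‖ = |(M ^ k) i0 j| := by
            simp
        _ ≤ t k := hent k i0 j
    exact e1.trans (e2.le.trans e3)
  have h0 : ‖v i0‖ ≤ 0 := by
    apply ge_of_tendsto' (x := Filter.atTop) ?_ hkey
    simpa using htt.mul_const (∑ j, ‖v j‖)
  exact absurd h0 (not_le.mpr (norm_pos_iff.mpr hi0))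

end StableAux

set_option maxHeartbeats 1000000 in
theorem stable_of_squareSummable_minimal_representation
    {n p : ℕ} {S : Type*} [Fintype S] {J : Type*} [Fintype J]
    (A : S → Matrix (Fin n) (Fin n) ℝ) (B : J → (Fin n → ℝ))
    (C : Matrix (Fin p) (Fin n) ℝ)
    (Ser : J → List S → (Fin p → ℝ))
    (hrep : ∀ j w, Ser j w = C *ᵥ ((wordProd A w) *ᵥ B j))
    (hreach : Submodule.span ℝ
      {v : Fin n → ℝ | ∃ (w : List S) (j : J), v = (wordProd A w) *ᵥ B j} = ⊤)
    (hobs : ∀ x : Fin n → ℝ,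
      (∀ w : List S, C *ᵥ ((wordProd A w) *ᵥ x) = 0) → x = 0)
    (hsummable : ∀ j : J, Summable (fun w : List S => ∑ i : Fin p, (Ser j w i) ^ 2)) :
    ∀ μ : ℂ,
      μ ∈ spectrum ℂ
        ((∑ σ : S, Matrix.kroneckerMap (· * ·) (A σ)ᵀ (A σ)ᵀ).map
          (algebraMap ℝ ℂ)) →
      ‖μ‖ < 1 := by
  classical
  have hsum' : ∀ j : J, Summable (fun w : List S =>
      ∑ i : Fin p, ((C *ᵥ (wordProd A w *ᵥ B j)) i) ^ 2) := by
    intro j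
    have hfe : (fun w : List S => ∑ i : Fin p, ((C *ᵥ (wordProd A w *ᵥ B j)) i) ^ 2)
        = fun w : List S => ∑ i : Fin p, (Ser j w i) ^ 2 := by
      funext w
      rw [hrep j w]
    rw [hfe]
    exact hsummable j
  have hall := StableAux.summable_all A B C hreach hsum'
  obtain ⟨W, hW⟩ := StableAux.obs_finset A C hobs
  obtain ⟨c, hc0, hcoer⟩ := StableAux.coercive A C W hW
  have hstate := StableAux.summable_state A C hall W c hcoer
  have hg := StableAux.summable_g A hstate
  have htt := StableAux.t_tendsto
    (fun w : List S => ∑ kk : Fin n, ∑ i : Fin n,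
      ((wordProd A w *ᵥ Pi.single kk 1) i) ^ 2) hg
  exact StableAux.abs_lt_one_of_entries _
    (fun k : ℕ => ∑ f : Fin k → S, ∑ kk : Fin n, ∑ i : Fin n,
      ((wordProd A (List.ofFn f) *ᵥ Pi.single kk 1) i) ^ 2)
    (fun k q r => StableAux.entry_bound A k q r) htt
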